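/- Let E be a finite-dimensional real normed vector space and C ⊆ E a closed convex cone. Suppose there exists a continuous linear functional f₀ on E with f₀(x) > 0 for all x ∈ C \ {0}. Then the interior of the dual cone {f ∈ E →L[ℝ] ℝ : f(x) ≥ 0 for all x ∈ C} is nonempty and consists exactly of those continuous linear functionals f with f(x) > 0 for all x ∈ C \ {0}. -/

import Mathlib

set_option synthInstance.maxHeartbeats 1000000 in
set_option maxHeartbeats 1000000 in
/-- **Interior of the dual cone.**
Let `E` be a finite-dimensional real normed space and `C ⊆ E` a closed convex cone
admitting a continuous linear functional `f₀` strictly positive on `C \ {0}`.  Then the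
interior of the dual cone `{f | ∀ x ∈ C, 0 ≤ f x}` in the continuous dual of `E` is
nonempty, and consists exactly of the continuous linear functionals strictly positive on
`C \ {0}`. -/
theorem interior_dualCone
    {E : Type*} [NormedAddCommGroup E] [NormedSpace ℝ E] [FiniteDimensional ℝ E]
    (C : Set E) (hCclosed : IsClosed C) (hCconvex : Convex ℝ C)
    (hCcone : ∀ t : ℝ, 0 ≤ t → ∀ x ∈ C, t • x ∈ C)
    (f₀ : E →L[ℝ] ℝ) (hf₀ : ∀ x ∈ C, x ≠ 0 → 0 < f₀ x) :
    (interior {f : E →L[ℝ] ℝ | ∀ x ∈ C, 0 ≤ f x}).Nonempty ∧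
      interior {f : E →L[ℝ] ℝ | ∀ x ∈ C, 0 ≤ f x}
        = {f : E →L[ℝ] ℝ | ∀ x ∈ C, x ≠ 0 → 0 < f x} := by
  have hEq : interior {f : E →L[ℝ] ℝ | ∀ x ∈ C, 0 ≤ f x}
      = {f : E →L[ℝ] ℝ | ∀ x ∈ C, x ≠ 0 → 0 < f x} := by
    apply Set.Subset.antisymm
    · -- interior ⊆ strictly positive
      intro f hf x hx hx0
      obtain ⟨ε, hε, hball⟩ := Metric.isOpen_iff.mp isOpen_interior f hf
      obtain ⟨g, hg1, hgx⟩ := exists_dual_vector ℝ x (norm_ne_zero_iff.mpr hx0)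
      have hmem : f - (ε / 2) • g ∈ Metric.ball f ε := by
        rw [Metric.mem_ball, dist_eq_norm]
        have : f - (ε / 2) • g - f = -((ε / 2) • g) := by abel
        rw [this, norm_neg]
        have hns := norm_smul (ε / 2) g
        rw [hns, hg1, mul_one, Real.norm_eq_abs,
          abs_of_pos (by linarith : (0:ℝ) < ε / 2)]
        linarith
      have hdual : f - (ε / 2) • g ∈ {f : E →L[ℝ] ℝ | ∀ x ∈ C, 0 ≤ f x} :=
        interior_subset (hball hmem)
      have h1 : 0 ≤ (f - (ε / 2) • g) x := hdual x hx
      have h2 : (f - (ε / 2) • g) x = f x - (ε / 2) * g x := by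
        simp [ContinuousLinearMap.sub_apply]
      have h3 : g x = ‖x‖ := by exact_mod_cast hgx
      have h4 : 0 < ‖x‖ := norm_pos_iff.mpr hx0
      rw [h2, h3] at h1
      nlinarith
    · -- strictly positive ⊆ interior
      intro f hf
      set K : Set E := C ∩ Metric.sphere (0 : E) 1 with hK
      have hKcompact : IsCompact K :=
        (isCompact_sphere (0 : E) 1).inter_left hCclosed
      obtain ⟨ε, hε, hεK⟩ : ∃ ε > 0, ∀ x ∈ K, ε ≤ f x := by
        rcases K.eq_empty_or_nonempty with hKe | hKne
        · exact ⟨1, one_pos, by simp [hKe]⟩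
        · obtain ⟨x₀, hx₀K, hx₀min⟩ :=
            hKcompact.exists_isMinOn hKne f.continuous.continuousOn
          refine ⟨f x₀, ?_, fun x hx => hx₀min hx⟩
          have hx₀C : x₀ ∈ C := hx₀K.1
          have hx₀0 : x₀ ≠ 0 := by
            intro h
            have := hx₀K.2
            rw [h, mem_sphere_iff_norm] at this
            simp at this
          exact hf x₀ hx₀C hx₀0
      rw [mem_interior]
      refine ⟨Metric.ball f ε, ?_, Metric.isOpen_ball, Metric.mem_ball_self hε⟩
      intro g hg x hx
      rcases eq_or_ne x 0 with rfl | hx0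
      · simp
      · have hnx : 0 < ‖x‖ := norm_pos_iff.mpr hx0
        set u : E := ‖x‖⁻¹ • x with hu
        have huC : u ∈ C := hCcone _ (inv_nonneg.mpr hnx.le) x hx
        have hun : ‖u‖ = 1 := by
          rw [hu, norm_smul, norm_inv, norm_norm, inv_mul_cancel₀ hnx.ne']
        have huK : u ∈ K := ⟨huC, by simpa [mem_sphere_iff_norm] using hun⟩
        have hfu : ε ≤ f u := hεK u huK
        have hdiff : |g u - f u| < ε := by
          have h1 : ‖(g - f) u‖ ≤ ‖g - f‖ * ‖u‖ := (g - f).le_opNorm u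
          rw [hun, mul_one] at h1
          have h2 : ‖g - f‖ < ε := by
            rw [← dist_eq_norm]; exact Metric.mem_ball.mp hg
          calc |g u - f u| = ‖(g - f) u‖ := by
                simp [ContinuousLinearMap.sub_apply, Real.norm_eq_abs]
            _ ≤ ‖g - f‖ := h1
            _ < ε := h2
        have hgu : 0 ≤ g u := by
          have := abs_lt.mp hdiff
          linarith [this.1]
        have hxu : x = ‖x‖ • u := by
          rw [hu, smul_smul, mul_inv_cancel₀ hnx.ne', one_smul]
        have : g x = ‖x‖ * g u := by
          conv_lhs => rw [hxu]
          simp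
        rw [this]
        positivity
  exact ⟨⟨f₀, hEq ▸ fun x hx hx0 => hf₀ x hx hx0⟩, hEq⟩
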